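/- Vanishing of the first variation of Hamilton's action along the true trajectory: let F be a real inner product space, m > 0, g, x₀, v₀ ∈ F, and t₁ < t₃ real numbers. Let x'(t) = v₀ − (t/m)•g be the velocity of the free trajectory x(t) = x₀ + t•v₀ − (t²/(2m))•g (so m·x'' = −g). If η : ℝ → F has derivative η'(t) at every t ∈ [t₁, t₃], η' is continuous on [t₁, t₃], and η(t₁) = η(t₃) = 0, then ∫_{t₁}^{t₃} (m·⟪x'(t), η'(t)⟫ − ⟪g, η(t)⟫) dt = 0. -/

import Mathlib

open MeasureTheory RealInnerProductSpace

/-- Vanishing of the first variation of Hamilton's action along the true trajectory: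
`∫ (m ⟪x', η'⟫ - ⟪g, η⟫) dt = 0` for any variation `η` vanishing at the endpoints. -/
theorem hamilton_first_variation_vanishes {F : Type*} [NormedAddCommGroup F]
    [InnerProductSpace ℝ F]
    (m : ℝ) (hm : 0 < m) (g x₀ v₀ : F) (t₁ t₃ : ℝ) (ht : t₁ < t₃)
    (x x' : ℝ → F)
    (hx : ∀ t : ℝ, x t = x₀ + t • v₀ - (t ^ 2 / (2 * m)) • g)
    (hx' : ∀ t : ℝ, x' t = v₀ - (t / m) • g)
    (η η' : ℝ → F)
    (hη : ∀ t ∈ Set.Icc t₁ t₃, HasDerivAt η (η' t) t)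
    (hη' : ContinuousOn η' (Set.Icc t₁ t₃))
    (hη₁ : η t₁ = 0) (hη₃ : η t₃ = 0) :
    (∫ t in t₁..t₃, (m * ⟪x' t, η' t⟫ - ⟪g, η t⟫)) = 0 := by
  have hIcc : Set.uIcc t₁ t₃ = Set.Icc t₁ t₃ := Set.uIcc_of_le ht.le
  have hx'deriv : ∀ t : ℝ, HasDerivAt x' ((-(1 / m)) • g) t := by
    intro t
    have h1 : HasDerivAt (fun t : ℝ => (t / m) • g) ((1 / m) • g) t := by
      have : HasDerivAt (fun t : ℝ => t / m) (1 / m) t := by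
        simpa using (hasDerivAt_id t).div_const m
      simpa using this.smul_const g
    have h2 : HasDerivAt (fun t : ℝ => v₀ - (t / m) • g) (0 - (1 / m) • g) t :=
      (hasDerivAt_const t v₀).sub h1
    simpa [funext hx', zero_sub] using h2
  have key : ∀ t ∈ Set.Icc t₁ t₃,
      HasDerivAt (fun t => m * ⟪x' t, η t⟫) (m * ⟪x' t, η' t⟫ - ⟪g, η t⟫) t := by
    intro t htmem
    have h := (hx'deriv t).inner ℝ (hη t htmem)
    have h2 := h.const_mul m
    refine h2.congr_deriv ?_
    rw [real_inner_smul_left]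
    field_simp
    ring
  have hηc : ContinuousOn η (Set.Icc t₁ t₃) := fun t htm =>
    (hη t htm).continuousAt.continuousWithinAt
  have hx'c : Continuous x' := by
    have : Continuous fun t : ℝ => v₀ - (t / m) • g := by continuity
    simpa [funext hx'] using this
  have hint : IntervalIntegrable (fun t => m * ⟪x' t, η' t⟫ - ⟪g, η t⟫)
      volume t₁ t₃ := by
    apply ContinuousOn.intervalIntegrable
    rw [hIcc]
    apply ContinuousOn.sub
    · exact continuousOn_const.mul
        (hx'c.continuousOn.inner hη')
    · exact continuousOn_const.inner hηc
  have := intervalIntegral.integral_eq_sub_of_hasDerivAt (fun t htm => key t (hIcc ▸ htm)) hint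
  rw [this, hη₁, hη₃]
  simp
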